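/- Let A be a positive self-adjoint operator from X to X*, and E a bounded operator on X leaving dom A invariant with E* A ⊆ A E. Then the map Ê defined on ran A ⊆ H_A by Ê(Ax) := A(Ex) is well-defined and bounded, with [Ê(Ax), Ê(Ax)] ≤ r(E²) [Ax, Ax], where r(E²) is the spectral radius of E². -/

import Mathlib

open scoped ComplexConjugate ComplexOrder InnerProductSpace ENNReal NNReal
noncomputable section

/-- The conjugate dual of a complex normed space: continuous conjugate-linear
functionals. Pairing `(v, x) := v x`. -/
abbrev CDual (X : Type*) [NormedAddCommGroup X] [NormedSpace ℂ X] :=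
  X →SL[starRingEnd ℂ] ℂ


/-- A densely defined operator `A : X → X*` is self-adjoint (`A = A*`):
it is densely defined, symmetric (`(Ax,y) = (x,Ay)` i.e. `A ⊆ A*`), and maximal
(any `y` for which `x ↦ (Ax,y)` is represented by some `w ∈ X*` lies in `dom A`
with `Ay = w`, i.e. `A* ⊆ A`). -/
def IsSelfAdjointOp {X : Type*} [NormedAddCommGroup X] [NormedSpace ℂ X]
    (A : X →ₗ.[ℂ] CDual X) : Prop :=
  Dense (A.domain : Set X) ∧
  (∀ x y : A.domain, A x (y : X) = starRingEnd ℂ (A y (x : X))) ∧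
  (∀ (y : X) (w : CDual X),
    (∀ x : A.domain, A x y = starRingEnd ℂ (w (x : X))) →
      ∃ hy : y ∈ A.domain, A ⟨y, hy⟩ = w)

/-- `(Ax, x) ≥ 0` for all `x ∈ dom A` (using the complex order). -/
def IsPositiveOp {X : Type*} [NormedAddCommGroup X] [NormedSpace ℂ X]
    (A : X →ₗ.[ℂ] CDual X) : Prop :=
  ∀ x : A.domain, 0 ≤ A x (x : X)


/-- A positive self-adjoint from X to X*; H_A the completion of
ran A with [Ax, Ay] := (Ax, y), encoded by Φ : dom A -> H_A with dense range and
inner (Φ y) (Φ x) = (A x)(y); E a bounded operator on X leaving dom A invariant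
and satisfying E* A ⊆ A E (i.e. (A x)(E y) = (A (E x))(y)).  Then the map
Ehat (Φ x) := Φ (E x) (representing Ax ↦ A (E x)) is well defined on ran A and
bounded, with [Ehat(Ax), Ehat(Ax)] ≤ r(E²) · [Ax, Ax] where r(E²) is the spectral
radius of E². -/
theorem statement16
    {X : Type*} [NormedAddCommGroup X] [NormedSpace ℂ X] [CompleteSpace X]
    {HA : Type*} [NormedAddCommGroup HA] [InnerProductSpace ℂ HA] [CompleteSpace HA]
    (A : X →ₗ.[ℂ] CDual X) (hsa : IsSelfAdjointOp A) (hpos : IsPositiveOp A)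
    (Φ : A.domain → HA) (hΦdense : DenseRange Φ)
    (hΦ : ∀ x y : A.domain, ⟪Φ y, Φ x⟫_ℂ = A x (y : X))
    (E : X →L[ℂ] X) (hinv : ∀ x : A.domain, E (x : X) ∈ A.domain)
    (hcomm : ∀ (x : A.domain) (y : X), A x (E y) = A ⟨E (x : X), hinv x⟩ y)
 :
    (∀ x y : A.domain, Φ x = Φ y →
        Φ ⟨E (x : X), hinv x⟩ = Φ ⟨E (y : X), hinv y⟩) ∧
    (∀ x : A.domain, (‖Φ ⟨E (x : X), hinv x⟩‖₊ ^ 2 : ℝ≥0∞) ≤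
        spectralRadius ℂ (E.comp E) * (‖Φ x‖₊ ^ 2 : ℝ≥0∞)) := by
  obtain ⟨hdense, hsym, hmax⟩ := hsa
  constructor
  · -- well-definedness
    intro x y hxy
    have h1 : ∀ u v : A.domain, ⟪Φ ⟨E (u : X), hinv u⟩, Φ ⟨E (v : X), hinv v⟩⟫_ℂ
        = ⟪Φ u, Φ ⟨E ((⟨E (v : X), hinv v⟩ : A.domain) : X),
            hinv ⟨E (v : X), hinv v⟩⟩⟫_ℂ := by
      intro u v
      rw [hΦ, hΦ]
      exact hcomm ⟨E (v : X), hinv v⟩ (u : X)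
    have e1 : ⟪Φ ⟨E (x : X), hinv x⟩, Φ ⟨E (x : X), hinv x⟩⟫_ℂ
        = ⟪Φ ⟨E (y : X), hinv y⟩, Φ ⟨E (x : X), hinv x⟩⟫_ℂ := by
      rw [h1 x x, hxy, ← h1 y x]
    have e2 : ⟪Φ ⟨E (x : X), hinv x⟩, Φ ⟨E (y : X), hinv y⟩⟫_ℂ
        = ⟪Φ ⟨E (y : X), hinv y⟩, Φ ⟨E (y : X), hinv y⟩⟫_ℂ := by
      rw [h1 x y, hxy, ← h1 y y]
    have hz : ⟪Φ ⟨E (x : X), hinv x⟩ - Φ ⟨E (y : X), hinv y⟩,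
        Φ ⟨E (x : X), hinv x⟩ - Φ ⟨E (y : X), hinv y⟩⟫_ℂ = 0 := by
      rw [inner_sub_left, inner_sub_right, inner_sub_right, e1, e2]
      ring
    exact sub_eq_zero.mp (inner_self_eq_zero.mp hz)
  · -- boundedness
    intro x
    have hmem : ∀ n : ℕ, (E ^ n) (x : X) ∈ A.domain := by
      intro n
      induction n with
      | zero => simpa using x.2
      | succ n ih =>
        have h : (E ^ (n + 1)) (x : X) = E ((E ^ n) (x : X)) := by
          rw [pow_succ']; rfl
        rw [h]
        exact hinv ⟨_, ih⟩
    set z : ℕ → A.domain := fun n => ⟨(E ^ n) (x : X), hmem n⟩ with hzdef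
    have hz0 : z 0 = x := Subtype.ext (by simp [hzdef])
    have hzs : ∀ n, z (n + 1) = ⟨E ((z n : X)), hinv (z n)⟩ := by
      intro n
      apply Subtype.ext
      show (E ^ (n + 1)) (x : X) = E ((E ^ n) (x : X))
      rw [pow_succ']; rfl
    have hA1 : ∀ m n, A (z (m + 1)) ((z n : X)) = A (z m) ((z (n + 1) : X)) := by
      intro m n
      rw [hzs m, hzs n]
      exact (hcomm (z m) ((z n : X))).symm
    have hAf : ∀ n m, A (z m) ((z n : X)) = A (z (m + n)) ((x : X)) := by
      intro n
      induction n with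
      | zero => intro m; rw [hz0, Nat.add_zero]
      | succ n ih =>
        intro m
        rw [← hA1 m n, ih (m + 1), show m + 1 + n = m + (n + 1) from by omega]
    set G : ℕ → ℝ≥0 := fun n => ‖Φ (z n)‖₊ with hGdef
    have hinner : ∀ m n, ⟪Φ (z n), Φ (z m)⟫_ℂ = A (z (m + n)) ((x : X)) := by
      intro m n
      rw [hΦ (z m) (z n), hAf n m]
    have hG2 : ∀ n, ‖A (z (2 * n)) ((x : X))‖₊ = G n ^ 2 := by
      intro n
      rw [two_mul, ← hinner n n, inner_self_eq_norm_sq_to_K]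
      simp [hGdef]
    have hCS : ∀ m n, ‖A (z (m + n)) ((x : X))‖₊ ≤ G n * G m := by
      intro m n
      rw [← hinner m n]
      exact nnnorm_inner_le_nnnorm _ _
    have hsq : ∀ m, G m ^ 2 ≤ G (2 * m) * G 0 := by
      intro m
      calc G m ^ 2 = ‖A (z (2 * m)) ((x : X))‖₊ := (hG2 m).symm
        _ = ‖A (z (2 * m + 0)) ((x : X))‖₊ := by rw [Nat.add_zero]
        _ ≤ G 0 * G (2 * m) := hCS (2 * m) 0
        _ = G (2 * m) * G 0 := mul_comm _ _
    have hQ : ∀ n, G 1 ^ (2 ^ n) ≤ G (2 ^ n) * G 0 ^ (2 ^ n - 1) := by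
      intro n
      induction n with
      | zero => simp
      | succ n ih =>
        have hk : 1 ≤ 2 ^ n := Nat.one_le_two_pow
        have e : 2 ^ (n + 1) = 2 * 2 ^ n := by ring
        rw [e]
        calc G 1 ^ (2 * 2 ^ n) = (G 1 ^ (2 ^ n)) ^ 2 := by
              rw [← pow_mul, mul_comm]
          _ ≤ (G (2 ^ n) * G 0 ^ (2 ^ n - 1)) ^ 2 :=
              pow_le_pow_left₀ zero_le ih 2
          _ = G (2 ^ n) ^ 2 * G 0 ^ ((2 ^ n - 1) * 2) := by
              rw [mul_pow, ← pow_mul]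
          _ ≤ (G (2 * 2 ^ n) * G 0) * G 0 ^ ((2 ^ n - 1) * 2) :=
              mul_le_mul_left (hsq (2 ^ n)) _
          _ = G (2 * 2 ^ n) * G 0 ^ (2 * 2 ^ n - 1) := by
              rw [mul_assoc]
              congr 1
              rw [← pow_succ']
              congr 1
              omega
    have hfb : ∀ k, ‖A (z k) ((x : X))‖₊ ≤ (‖A x‖₊ * ‖(x : X)‖₊) * ‖E ^ k‖₊ := by
      intro k
      rw [hsym (z k) x, RCLike.nnnorm_conj]
      have hco : ((z k : A.domain) : X) = (E ^ k) (x : X) := rfl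
      calc ‖A x ((z k : X))‖₊ ≤ ‖A x‖₊ * ‖((z k : A.domain) : X)‖₊ :=
            (A x).le_opNNNorm _
        _ ≤ ‖A x‖₊ * (‖E ^ k‖₊ * ‖(x : X)‖₊) := by
            rw [hco]
            exact mul_le_mul_right ((E ^ k).le_opNNNorm _) _
        _ = (‖A x‖₊ * ‖(x : X)‖₊) * ‖E ^ k‖₊ := by ring
    set C : ℝ≥0 := ‖A x‖₊ * ‖(x : X)‖₊ with hCdef
    have hGT : ∀ n, G (2 ^ n) ^ 2 ≤ C * ‖(E.comp E) ^ (2 ^ n)‖₊ := by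
      intro n
      have hE2 : E ^ (2 * 2 ^ n) = (E.comp E) ^ (2 ^ n) := by
        rw [pow_mul, sq]; rfl
      rw [← hG2 (2 ^ n), ← hE2]
      exact hfb (2 * 2 ^ n)
    have hsub : ∀ k : ℕ, (k - 1) * 2 = 2 * k - 2 := by intro k; omega
    have K1 : ∀ n, G 1 ^ (2 * 2 ^ n) ≤
        (C * ‖(E.comp E) ^ (2 ^ n)‖₊) * G 0 ^ (2 * 2 ^ n - 2) := by
      intro n
      calc G 1 ^ (2 * 2 ^ n) = (G 1 ^ (2 ^ n)) ^ 2 := by rw [← pow_mul, mul_comm]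
        _ ≤ (G (2 ^ n) * G 0 ^ (2 ^ n - 1)) ^ 2 :=
            pow_le_pow_left₀ zero_le (hQ n) 2
        _ = G (2 ^ n) ^ 2 * G 0 ^ ((2 ^ n - 1) * 2) := by rw [mul_pow, ← pow_mul]
        _ ≤ (C * ‖(E.comp E) ^ (2 ^ n)‖₊) * G 0 ^ (2 * 2 ^ n - 2) := by
            rw [hsub]
            exact mul_le_mul_left (hGT n) _
    have hΦE : Φ (⟨E (x : X), hinv x⟩ : A.domain) = Φ (z 1) :=
      congrArg Φ (Subtype.ext (show E (x : X) = (E ^ 1) (x : X) by rw [pow_one]))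
    have hΦ0 : Φ x = Φ (z 0) := by rw [hz0]
    suffices hfin : ((G 1 ^ 2 : ℝ≥0) : ℝ≥0∞) ≤
        spectralRadius ℂ (E.comp E) * ((G 0 ^ 2 : ℝ≥0) : ℝ≥0∞) by
      rw [hΦE, hΦ0]
      simpa [ENNReal.coe_pow] using hfin
    -- dispose of degenerate cases
    by_cases hG0 : G 0 = 0
    · have h1 := hQ 1
      rw [hG0] at h1
      norm_num at h1
      rw [h1]
      simp
    by_cases hC0 : C = 0
    · have h1 := K1 0
      rw [hC0] at h1
      norm_num at h1
      rw [h1]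
      simp
    -- main case
    have hRfin : spectralRadius ℂ (E.comp E) ≠ ⊤ := by
      have h := spectrum.spectralRadius_le_pow_nnnorm_pow_one_div ℂ (E.comp E) 0
      exact ne_top_of_le_ne_top
        (ENNReal.mul_ne_top
          (ENNReal.rpow_ne_top_of_nonneg (by norm_num) ENNReal.coe_ne_top)
          (ENNReal.rpow_ne_top_of_nonneg (by norm_num) ENNReal.coe_ne_top)) h
    set R : ℝ≥0 := (spectralRadius ℂ (E.comp E)).toNNReal with hRdef
    have hRcoe : (R : ℝ≥0∞) = spectralRadius ℂ (E.comp E) :=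
      ENNReal.coe_toNNReal hRfin
    rw [← hRcoe, ← ENNReal.coe_mul, ENNReal.coe_le_coe]
    suffices hmain : ∀ ρ : ℝ≥0, R < ρ → G 1 ^ 2 ≤ ρ * G 0 ^ 2 by
      by_contra hcon
      push_neg at hcon
      have hG0pos : (0 : ℝ≥0) < G 0 ^ 2 := pos_iff_ne_zero.mpr (pow_ne_zero _ hG0)
      have h1 : R < G 1 ^ 2 / G 0 ^ 2 := (lt_div_iff₀ hG0pos).mpr hcon
      obtain ⟨ρ, hρ1, hρ2⟩ := exists_between h1
      have h2 : G 1 ^ 2 / G 0 ^ 2 ≤ ρ := by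
        rw [div_le_iff₀ hG0pos]
        exact hmain ρ hρ1
      exact absurd h2 (not_le.mpr hρ2)
    intro ρ hρ
    have hρ0 : (0 : ℝ≥0) < ρ := lt_of_le_of_lt zero_le hρ
    have hgel := spectrum.pow_nnnorm_pow_one_div_tendsto_nhds_spectralRadius (E.comp E)
    have hlt : spectralRadius ℂ (E.comp E) < (ρ : ℝ≥0∞) := by
      rw [← hRcoe]
      exact_mod_cast hρ
    obtain ⟨n₀, hn₀⟩ := Filter.eventually_atTop.mp (hgel.eventually_lt_const hlt)
    by_contra hcon
    push_neg at hcon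
    have hb0 : (0 : ℝ≥0) < ρ * G 0 ^ 2 :=
      mul_pos hρ0 (pos_iff_ne_zero.mpr (pow_ne_zero _ hG0))
    have hq1 : 1 < G 1 ^ 2 / (ρ * G 0 ^ 2) := (one_lt_div hb0).mpr hcon
    obtain ⟨M, hM⟩ := pow_unbounded_of_one_lt (C / G 0 ^ 2) hq1
    set m : ℕ := max M n₀ with hmdef
    set N : ℕ := 2 ^ m with hNdef
    have hN1 : 1 ≤ N := Nat.one_le_two_pow
    have hmN : m < N := Nat.lt_two_pow_self
    have hMN : M ≤ N := le_trans (le_max_left _ _) hmN.le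
    have hn0N : n₀ ≤ N := le_trans (le_max_right _ _) hmN.le
    -- norm bound from Gelfand's formula
    have hTn : ‖(E.comp E) ^ N‖₊ ≤ ρ ^ N := by
      have h := hn₀ N hn0N
      have hN0 : ((N : ℝ)) ≠ 0 := by positivity
      have h2 := ENNReal.rpow_le_rpow h.le (Nat.cast_nonneg N)
      rw [← ENNReal.rpow_mul, one_div, inv_mul_cancel₀ hN0, ENNReal.rpow_one,
        ENNReal.rpow_natCast] at h2
      exact_mod_cast h2
    have hkey : G 1 ^ (2 * N) ≤ (C * ρ ^ N) * G 0 ^ (2 * N - 2) :=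
      (K1 m).trans (mul_le_mul_left (mul_le_mul_right hTn C) _)
    have hqN : (G 1 ^ 2 / (ρ * G 0 ^ 2)) ^ N ≤ C / G 0 ^ 2 := by
      rw [div_pow, div_le_div_iff₀ (pow_pos hb0 N) (pos_iff_ne_zero.mpr (pow_ne_zero _ hG0))]
      calc (G 1 ^ 2) ^ N * G 0 ^ 2 = G 1 ^ (2 * N) * G 0 ^ 2 := by
            rw [← pow_mul]
        _ ≤ ((C * ρ ^ N) * G 0 ^ (2 * N - 2)) * G 0 ^ 2 :=
            mul_le_mul_left hkey _
        _ = C * (ρ ^ N * G 0 ^ (2 * N)) := by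
            rw [mul_assoc, mul_assoc, ← pow_add]
            congr 3
            omega
        _ = C * (ρ * G 0 ^ 2) ^ N := by
            rw [mul_pow, ← pow_mul]
    have hfin2 : C / G 0 ^ 2 < (G 1 ^ 2 / (ρ * G 0 ^ 2)) ^ N :=
      lt_of_lt_of_le hM (pow_le_pow_right' hq1.le hMN)
    exact absurd hqN (not_le.mpr hfin2)
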